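/- Let P ⊆ ℝⁿ be a polytope and v ∈ ℝⁿ. Then (P,v) is quasi-positively oriented if and only if the coherent subdivision π(F^φ) is tight, i.e. for every z ∈ P the polytope P ∩ ρ_zP admits a unique minimizer and a unique maximizer of ⟨−,v⟩ if and only if dim F + dim G = dim((F+G)/2) for every (F,G) ∈ F^φ. -/

import Mathlib

open scoped BigOperators

noncomputable section

/-- Vectors in `ℝⁿ`. -/
abbrev Vec (n : ℕ) := Fin n → ℝ

/-- The standard scalar product on `ℝⁿ`. -/
def dot {n : ℕ} (x y : Vec n) : ℝ := ∑ i, x i * y i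

/-- A polytope is the convex hull of a finite set of points. -/
def IsPolytope {n : ℕ} (P : Set (Vec n)) : Prop :=
  ∃ S : Finset (Vec n), P = convexHull ℝ (S : Set (Vec n))

/-- A face of `P`: either `P` itself (take `c = 0`) or the subset of `P` where some linear
functional attains its maximum over `P`. -/
def IsFace {n : ℕ} (P F : Set (Vec n)) : Prop :=
  ∃ c : Vec n, F = {x ∈ P | ∀ y ∈ P, dot c y ≤ dot c x}

/-- Dimension of a subset of `ℝⁿ`: the rank of the direction of its affine span. -/
noncomputable def sdim {n : ℕ} (A : Set (Vec n)) : ℕ :=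
  Module.finrank ℝ (affineSpan ℝ A).direction

/-- The normal cone of a face `F` of `P`. -/
def normalCone {n : ℕ} (P F : Set (Vec n)) : Set (Vec n) :=
  {c | F ⊆ {x ∈ P | ∀ y ∈ P, dot c y ≤ dot c x}}

/-- `coneOf X`: nonnegative linear combinations of finitely many elements of `X`. -/
def coneOf {n : ℕ} (X : Set (Vec n)) : Set (Vec n) :=
  {v | ∃ (k : ℕ) (x : Fin k → Vec n) (l : Fin k → ℝ),
      (∀ i, x i ∈ X) ∧ (∀ i, 0 ≤ l i) ∧ v = ∑ i, l i • x i}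

/-- The reflection `ρ_z P = 2z - P` of `P` with respect to `z`. -/
def reflP {n : ℕ} (z : Vec n) (P : Set (Vec n)) : Set (Vec n) :=
  (fun x => (2 : ℝ) • z - x) '' P

/-- An edge is a 1-dimensional face. -/
def IsEdge {n : ℕ} (P E : Set (Vec n)) : Prop := IsFace P E ∧ sdim E = 1

/-- `(P, v)` is oriented if `v` is not perpendicular to any edge of `P`. -/
def Oriented {n : ℕ} (P : Set (Vec n)) (v : Vec n) : Prop :=
  ∀ E, IsEdge P E → ∀ d ∈ (affineSpan ℝ E).direction, d ≠ 0 → dot d v ≠ 0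

/-- `(P, v)` is positively oriented if `(P ∩ ρ_z P, v)` is oriented for every `z ∈ P`. -/
def PosOriented {n : ℕ} (P : Set (Vec n)) (v : Vec n) : Prop :=
  ∀ z ∈ P, Oriented (P ∩ reflP z P) v

/-- `x` is the minimizer of `⟨-, v⟩` on `P`. -/
def IsBotOf {n : ℕ} (P : Set (Vec n)) (v x : Vec n) : Prop :=
  x ∈ P ∧ ∀ y ∈ P, dot v x ≤ dot v y

/-- `x` is the maximizer of `⟨-, v⟩` on `P`. -/
def IsTopOf {n : ℕ} (P : Set (Vec n)) (v x : Vec n) : Prop :=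
  x ∈ P ∧ ∀ y ∈ P, dot v y ≤ dot v x

/-- `(P, v)` is quasi-oriented if `⟨-, v⟩` has a unique minimizer and a unique maximizer on `P`. -/
def QuasiOriented {n : ℕ} (P : Set (Vec n)) (v : Vec n) : Prop :=
  (∃! x, IsBotOf P v x) ∧ (∃! x, IsTopOf P v x)

/-- `(P, v)` is quasi-positively oriented if `(P ∩ ρ_z P, v)` is quasi-oriented for all `z ∈ P`. -/
def QuasiPosOriented {n : ℕ} (P : Set (Vec n)) (v : Vec n) : Prop :=
  ∀ z ∈ P, QuasiOriented (P ∩ reflP z P) v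

/-- The polytope `P^φ = π^φ(P × P) ⊆ ℝ^{n+1}`, where `π^φ(x,y) = ((x+y)/2, ⟨x - y, v⟩)`. -/
def Pphi {n : ℕ} (P : Set (Vec n)) (v : Vec n) : Set (Vec (n + 1)) :=
  {w | ∃ x ∈ P, ∃ y ∈ P, w = Fin.snoc ((1 / 2 : ℝ) • (x + y)) (dot (x - y) v)}

/-- The pair of faces `(F, G)` belongs to `F^φ`: there are no `x ∈ F`, `y ∈ G`, `λ > 0` with
`(π(x,y), φ(x,y) - λ) ∈ P^φ`. -/
def InFphi {n : ℕ} (P : Set (Vec n)) (v : Vec n) (F G : Set (Vec n)) : Prop :=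
  ¬ ∃ x ∈ F, ∃ y ∈ G, ∃ lam : ℝ, 0 < lam ∧
      (Fin.snoc ((1 / 2 : ℝ) • (x + y)) (dot (x - y) v - lam) : Vec (n + 1)) ∈ Pphi P v

/-- The set `(A + B)/2`. -/
def avgSet {n : ℕ} (A B : Set (Vec n)) : Set (Vec n) :=
  {z | ∃ x ∈ A, ∃ y ∈ B, z = (1 / 2 : ℝ) • (x + y)}

/-- The coherent subdivision `π(F^φ)` is tight. -/
def TightSub {n : ℕ} (P : Set (Vec n)) (v : Vec n) : Prop :=
  ∀ F G : Set (Vec n), IsFace P F → IsFace P G → F.Nonempty → G.Nonempty →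
    InFphi P v F G → sdim F + sdim G = sdim (avgSet F G)

/-- `d` is a direction of an edge of `P ∩ ρ_z P` for some `z ∈ P`; the hyperplanes of the
fundamental hyperplane arrangement `H_P` are the orthogonal complements of such directions. -/
def EdgeDir {n : ℕ} (P : Set (Vec n)) (d : Vec n) : Prop :=
  d ≠ 0 ∧ ∃ z ∈ P, ∃ E, IsEdge (P ∩ reflP z P) E ∧ d ∈ (affineSpan ℝ E).direction

/-- The cone `cone(-N_P(F) ∪ N_P(G))`. -/
def diagCone {n : ℕ} (P F G : Set (Vec n)) : Set (Vec n) :=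
  coneOf ((Neg.neg '' normalCone P F) ∪ normalCone P G)













theorem dot_comm {n : ℕ} (x y : Vec n) : dot x y = dot y x := by
  simp [dot, mul_comm]

theorem dot_add_left {n : ℕ} (x y z : Vec n) : dot (x + y) z = dot x z + dot y z := by
  simp [dot, add_mul, Finset.sum_add_distrib]

theorem dot_add_right {n : ℕ} (x y z : Vec n) : dot x (y + z) = dot x y + dot x z := by
  simp [dot, mul_add, Finset.sum_add_distrib]

theorem dot_sub_left {n : ℕ} (x y z : Vec n) : dot (x - y) z = dot x z - dot y z := by
  simp [dot, sub_mul, Finset.sum_sub_distrib]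

theorem dot_sub_right {n : ℕ} (x y z : Vec n) : dot x (y - z) = dot x y - dot x z := by
  simp [dot, mul_sub, Finset.sum_sub_distrib]

theorem dot_smul_left {n : ℕ} (r : ℝ) (x y : Vec n) : dot (r • x) y = r * dot x y := by
  simp [dot, Finset.mul_sum, mul_assoc]

theorem dot_smul_right {n : ℕ} (r : ℝ) (x y : Vec n) : dot x (r • y) = r * dot x y := by
  simp [dot, Finset.mul_sum]; apply Finset.sum_congr rfl; intros; ring

theorem dot_zero_left {n : ℕ} (x : Vec n) : dot 0 x = 0 := by simp [dot]

theorem dot_zero_right {n : ℕ} (x : Vec n) : dot x 0 = 0 := by simp [dot]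

theorem dot_self_nonneg {n : ℕ} (x : Vec n) : 0 ≤ dot x x :=
  Finset.sum_nonneg fun i _ => mul_self_nonneg _

theorem dot_self_pos {n : ℕ} {x : Vec n} (hx : x ≠ 0) : 0 < dot x x := by
  rcases (dot_self_nonneg x).lt_or_eq with h | h
  · exact h
  · exfalso; apply hx; funext i
    have := (Finset.sum_eq_zero_iff_of_nonneg (fun i _ => mul_self_nonneg (x i))).1 h.symm
    have := this i (Finset.mem_univ i)
    have : x i = 0 := by nlinarith
    simpa using this

theorem dot_neg_left {n : ℕ} (x y : Vec n) : dot (-x) y = - dot x y := by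
  simp [dot, Finset.sum_neg_distrib]





variable {E : Type*} [AddCommGroup E] [Module ℝ E]

/-- membership in the cone generated by a list of vectors -/
def coneL : List E → E → Prop
  | [], u => u = 0
  | (a :: L), u => ∃ t : ℝ, 0 ≤ t ∧ ∃ w : E, coneL L w ∧ u = w + t • a

theorem coneL_nil {u : E} : coneL ([] : List E) u ↔ u = 0 := Iff.rfl

theorem coneL_cons {a : E} {L : List E} {u : E} :
    coneL (a :: L) u ↔ ∃ t : ℝ, 0 ≤ t ∧ ∃ w : E, coneL L w ∧ u = w + t • a := Iff.rfl

/-- An algebraic Farkas lemma: either `u` is in the cone generated by `L`, or some linear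
functional (represented via the bilinear form `B`) separates it. -/
theorem farkas (B : E →ₗ[ℝ] E →ₗ[ℝ] ℝ) (hpos : ∀ u : E, u ≠ 0 → 0 < B u u) :
    ∀ (k : ℕ) (L : List E), L.length ≤ k → ∀ u : E,
      coneL L u ∨ ∃ c : E, (∀ q ∈ L, B c q ≤ 0) ∧ 0 < B c u := by
  intro k
  induction k with
  | zero =>
    intro L hL u
    have : L = [] := List.length_eq_zero_iff.1 (Nat.le_zero.1 hL)
    subst this
    by_cases hu : u = 0
    · exact Or.inl hu
    · exact Or.inr ⟨u, by simp, hpos u hu⟩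
  | succ k IH =>
    intro L hL u
    match L with
    | [] =>
      by_cases hu : u = 0
      · exact Or.inl hu
      · exact Or.inr ⟨u, by simp, hpos u hu⟩
    | a :: L' =>
      have hL' : L'.length ≤ k := by simpa using hL
      rcases IH L' hL' u with h | ⟨c, hc, hcu⟩
      · exact Or.inl ⟨0, le_refl _, u, h, by simp⟩
      · by_cases hca : B c a ≤ 0
        · refine Or.inr ⟨c, ?_, hcu⟩
          intro q hq
          rcases List.mem_cons.1 hq with rfl | hq
          · exact hca
          · exact hc q hq
        · push_neg at hca
          set g : E → E := fun q => q - (B c q / B c a) • a with hg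
          have hga : g a = 0 := by
            simp only [hg]
            rw [div_self (ne_of_gt hca), one_smul, sub_self]
          have hBg : ∀ d q : E, B d (g q) = B (d - (B d a / B c a) • c) q := by
            intro d q
            simp only [hg, map_sub, map_smul, LinearMap.sub_apply, LinearMap.smul_apply,
              smul_eq_mul]
            field_simp
          have hlen : (L'.map g).length ≤ k := by simpa using hL'
          rcases IH (L'.map g) hlen (g u) with hcone | ⟨d, hd, hdu⟩
          · -- reconstruct cone membership
            left
            have key : ∀ (M : List E), (∀ q ∈ M, B c q ≤ 0) → ∀ w : E, coneL (M.map g) w →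
                ∃ s : ℝ, s ≤ 0 ∧ coneL M (w + s • a) := by
              intro M
              induction M with
              | nil =>
                intro _ w hw
                refine ⟨0, le_refl _, ?_⟩
                rw [List.map_nil, coneL_nil] at hw
                show coneL [] _
                rw [coneL_nil]
                simp [hw]
              | cons b M' IHM =>
                intro hM w hw
                rw [List.map_cons, coneL_cons] at hw
                obtain ⟨t, ht, w', hw', rfl⟩ := hw
                obtain ⟨s', hs', hM'⟩ := IHM (fun q hq => hM q (List.mem_cons_of_mem _ hq)) w' hw'
                have hb : B c b ≤ 0 := hM b List.mem_cons_self
                refine ⟨s' + t * (B c b / B c a), ?_, ?_⟩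
                · have : B c b / B c a ≤ 0 := div_nonpos_of_nonpos_of_nonneg hb (le_of_lt hca)
                  nlinarith
                · rw [coneL_cons]
                  refine ⟨t, ht, w' + s' • a, hM', ?_⟩
                  simp only [hg]
                  module
            obtain ⟨s, hs, hMs⟩ := key L' hc (g u) hcone
            have hbeta : 0 < B c u / B c a - s := by
              have h1 : 0 < B c u / B c a := div_pos hcu hca
              linarith
            rw [coneL_cons]
            refine ⟨B c u / B c a - s, le_of_lt hbeta, g u + s • a, hMs, ?_⟩
            simp only [hg]
            module
          · -- build separating functional for a :: L'
            right
            refine ⟨d - (B d a / B c a) • c, ?_, ?_⟩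
            · intro q hq
              rcases List.mem_cons.1 hq with rfl | hq
              · rw [← hBg d q, hga]
                · simp
              · rw [← hBg d q]
                exact hd (g q) (List.mem_map_of_mem (f := g) hq)
            · rw [← hBg d u]
              exact hdu

/-- If `u` is in the cone of `L` and `p + w ∈ K` for each `w ∈ L`, with `K` convex
containing `p`, then a small perturbation `p + ε u` stays in `K`. -/
theorem coneL_perturb {K : Set E} (hK : Convex ℝ K) {p : E} (hp : p ∈ K) :
    ∀ (L : List E), (∀ w ∈ L, p + w ∈ K) → ∀ u : E, coneL L u →
      ∃ ε : ℝ, 0 < ε ∧ p + ε • u ∈ K := by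
  intro L
  induction L with
  | nil =>
    intro _ u hu
    rw [coneL_nil] at hu
    exact ⟨1, one_pos, by simp [hu, hp]⟩
  | cons a M IHM =>
    intro hL u hu
    rw [coneL_cons] at hu
    obtain ⟨t, ht, w, hw, rfl⟩ := hu
    obtain ⟨ε₁, hε₁, h1⟩ := IHM (fun q hq => hL q (List.mem_cons_of_mem _ hq)) w hw
    have hpa : p + a ∈ K := hL a List.mem_cons_self
    set ε : ℝ := min (ε₁ / 2) (1 / (2 * (t + 1))) with hε
    have htpos : (0:ℝ) < t + 1 := by linarith
    have hεpos : 0 < ε := lt_min (by linarith) (by positivity)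
    have hεt : ε * t < 1 := by
      have h2 : ε ≤ 1 / (2 * (t + 1)) := min_le_right _ _
      have : ε * t ≤ (1 / (2 * (t + 1))) * t := by nlinarith
      have : (1 / (2 * (t + 1))) * t < 1 := by
        rw [div_mul_eq_mul_div, div_lt_one (by linarith)]
        nlinarith
      linarith
    set s : ℝ := ε * t with hs
    have hs0 : 0 ≤ s := mul_nonneg (le_of_lt hεpos) ht
    have hs1 : s < 1 := hεt
    set δ : ℝ := ε / (1 - s) with hδ
    have h1s : 0 < 1 - s := by linarith
    have hδpos : 0 < δ := div_pos hεpos h1s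
    have hδle : δ ≤ ε₁ := by
      rw [hδ, div_le_iff₀ h1s]
      have hε2 : ε ≤ ε₁ / 2 := min_le_left _ _
      have hs12 : 1 / 2 ≤ 1 - s ∨ True := Or.inr trivial
      -- need: ε ≤ ε₁ * (1 - s). Since s = ε * t ≤ 1/2? Not necessarily; use ε ≤ ε₁/2 and 1 - s ≥ 1/2?
      have hshalf : s ≤ 1 / 2 := by
        have h2 : ε ≤ 1 / (2 * (t + 1)) := min_le_right _ _
        have : ε * t ≤ (1 / (2 * (t + 1))) * t := by nlinarith
        have : (1 / (2 * (t + 1))) * t ≤ 1 / 2 := by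
          rw [div_mul_eq_mul_div, div_le_div_iff₀ (by linarith) (by norm_num)]
          nlinarith
        linarith [hs]
      nlinarith
    -- p + δ • w ∈ K
    have hpδw : p + δ • w ∈ K := by
      have := hK h1 hp (by positivity : (0:ℝ) ≤ δ / ε₁)
        (by
          have : δ / ε₁ ≤ 1 := by
            rw [div_le_one hε₁]; exact hδle
          linarith : (0:ℝ) ≤ 1 - δ / ε₁)
        (by ring)
      have heq : (δ / ε₁) • (p + ε₁ • w) + (1 - δ / ε₁) • p = p + δ • w := by
        have hne : ε₁ ≠ 0 := ne_of_gt hε₁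
        rw [smul_add, smul_smul, div_mul_cancel₀ _ hne]
        module
      rwa [heq] at this
    -- final combination
    have final := hK hpδw hpa (le_of_lt h1s) hs0 (by ring)
    have heq2 : (1 - s) • (p + δ • w) + s • (p + a) = p + ε • (w + t • a) := by
      have h1 : (1 - s) • (δ • w) = ε • w := by
        rw [smul_smul, hδ]
        congr 1
        field_simp
      rw [smul_add, smul_add, h1]
      have h2 : s • a = ε • (t • a) := by rw [smul_smul, hs]
      rw [h2]
      module
    rw [heq2] at final
    exact ⟨ε, hεpos, final⟩

/-- Supporting-hyperplane existence at a point of a polytope admitting an excluded ray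
direction. -/
theorem exists_support (B : E →ₗ[ℝ] E →ₗ[ℝ] ℝ) (hpos : ∀ u : E, u ≠ 0 → 0 < B u u)
    (T : Finset E) (p u : E) (hp : p ∈ convexHull ℝ (T : Set E))
    (hray : ∀ ε : ℝ, 0 < ε → p + ε • u ∉ convexHull ℝ (T : Set E)) :
    ∃ c : E, 0 < B c u ∧ ∀ q ∈ T, B c q ≤ B c p := by
  set L : List E := T.toList.map (fun q => q - p) with hLdef
  rcases farkas B hpos L.length L le_rfl u with hcone | ⟨c, hc, hcu⟩
  · exfalso
    have hmem : ∀ w ∈ L, p + w ∈ convexHull ℝ (T : Set E) := by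
      intro w hw
      rw [hLdef, List.mem_map] at hw
      obtain ⟨q, hq, rfl⟩ := hw
      have : q ∈ (T : Set E) := by simpa using Finset.mem_toList.1 hq
      have := subset_convexHull ℝ (T : Set E) this
      simpa using this
    obtain ⟨ε, hε, hmem'⟩ := coneL_perturb (convex_convexHull ℝ _) hp L hmem u hcone
    exact hray ε hε hmem'
  · refine ⟨c, hcu, ?_⟩
    intro q hq
    have : q - p ∈ L := by
      rw [hLdef, List.mem_map]
      exact ⟨q, Finset.mem_toList.2 hq, rfl⟩
    have := hc _ this
    rw [map_sub] at this
    linarith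






theorem seg_mem {E : Type*} [AddCommGroup E] [Module ℝ E] {K : Set E} (hK : Convex ℝ K)
    {x d : E} (hx : x ∈ K) (hxd : x + d ∈ K) {θ : ℝ} (h0 : 0 ≤ θ) (h1 : θ ≤ 1) :
    x + θ • d ∈ K := by
  have := hK hxd hx h0 (by linarith : (0:ℝ) ≤ 1 - θ) (by ring)
  have heq : θ • (x + d) + (1 - θ) • x = x + θ • d := by module
  rwa [heq] at this

/-- In a nonempty convex set, any vector of the `vectorSpan` can be realized as a direction
of a small segment inside the set. -/
theorem exists_shift {n : ℕ} {C : Set (Vec n)} (hC : Convex ℝ C) (hne : C.Nonempty)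
    {d : Vec n} (hd : d ∈ vectorSpan ℝ C) :
    ∃ x ∈ C, ∃ ε : ℝ, 0 < ε ∧ x + ε • d ∈ C := by
  rw [vectorSpan_def, Submodule.mem_span_set'] at hd
  obtain ⟨k, f, g, hsum⟩ := hd
  rcases Nat.eq_zero_or_pos k with rfl | hk
  · obtain ⟨x, hx⟩ := hne
    refine ⟨x, hx, 1, one_pos, ?_⟩
    have : d = 0 := by rw [← hsum]; simp
    simp [this, hx]
  -- for each i, g i ∈ C -ᵥ C
  have hgi : ∀ i : Fin k, ∃ a ∈ C, ∃ b ∈ C, a - b = (g i : Vec n) := by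
    intro i
    have := (g i).2
    rw [Set.mem_vsub] at this
    obtain ⟨a, ha, b, hb, hab⟩ := this
    exact ⟨a, ha, b, hb, by rw [← hab]; simp [vsub_eq_sub]⟩
  choose a ha b hb hab using hgi
  set kR : ℝ := (k : ℝ) with hkR
  have hkRpos : 0 < kR := by rw [hkR]; exact_mod_cast hk
  set S : ℝ := ∑ i : Fin k, |f i| with hS
  have hSnn : 0 ≤ S := Finset.sum_nonneg fun i _ => abs_nonneg _
  set ε : ℝ := (1 / (2 * kR)) / (1 + S) with hε
  have hεpos : 0 < ε := by positivity
  -- weights on Fin k × Bool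
  set w : Fin k × Bool → ℝ := fun p => if p.2 then 1 / (2 * kR) + ε * f p.1
      else 1 / (2 * kR) - ε * f p.1 with hw
  set pts : Fin k × Bool → Vec n := fun p => if p.2 then a p.1 else b p.1 with hpts
  have habs : ∀ i : Fin k, ε * |f i| ≤ 1 / (2 * kR) := by
    intro i
    have h1 : |f i| ≤ S := Finset.single_le_sum (f := fun j => |f j|)
      (fun j _ => abs_nonneg _) (Finset.mem_univ i)
    have h2 : ε * (1 + S) = 1 / (2 * kR) := by
      rw [hε, div_mul_cancel₀]
      positivity
    have h3 : ε * |f i| ≤ ε * (1 + S) :=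
      mul_le_mul_of_nonneg_left (by linarith) (le_of_lt hεpos)
    linarith
  have hwnn : ∀ p : Fin k × Bool, 0 ≤ w p := by
    intro ⟨i, s⟩
    have h := habs i
    have h1 := le_abs_self (f i)
    have h2 := neg_abs_le (f i)
    have hεf : |ε * f i| ≤ 1 / (2 * kR) := by
      rw [abs_mul, abs_of_pos hεpos]; exact h
    have := abs_le.1 hεf
    cases s
    · show 0 ≤ 1 / (2 * kR) - ε * f i
      linarith [this.1, this.2]
    · show 0 ≤ 1 / (2 * kR) + ε * f i
      linarith [this.1, this.2]
  have hwsum : ∑ p : Fin k × Bool, w p = 1 := by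
    rw [Fintype.sum_prod_type]
    have h : ∀ i : Fin k, ∑ s : Bool, w (i, s) = 1 / kR := by
      intro i
      rw [Fintype.sum_bool]
      show (1 / (2 * kR) + ε * f i) + (1 / (2 * kR) - ε * f i) = 1 / kR
      ring
    rw [Finset.sum_congr rfl (fun i _ => h i)]
    rw [Finset.sum_const, Finset.card_univ, Fintype.card_fin, nsmul_eq_mul]
    rw [hkR]
    rw [mul_one_div, div_self (ne_of_gt hkRpos)]
  have hmem : ∀ p : Fin k × Bool, pts p ∈ C := by
    intro ⟨i, s⟩; cases s <;> simp [hpts] <;> [exact hb i; exact ha i]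
  have hcomb : ∑ p : Fin k × Bool, w p • pts p ∈ C :=
    hC.sum_mem (fun p _ => hwnn p) hwsum (fun p _ => hmem p)
  set x : Vec n := ∑ i : Fin k, (1 / (2 * kR)) • (a i + b i) with hx
  have hxC : x ∈ C := by
    rw [hx]
    have : ∀ i : Fin k, (1 / (2 * kR)) • (a i + b i) = (1 / kR) • ((1/2 : ℝ) • (a i + b i)) := by
      intro i; rw [smul_smul]; congr 1; field_simp
    rw [Finset.sum_congr rfl (fun i _ => this i)]
    refine hC.sum_mem (fun i _ => by positivity) ?_ (fun i _ => ?_)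
    · simp; field_simp; exact hkR.symm
    · have := hC (ha i) (hb i) (by norm_num : (0:ℝ) ≤ 1/2) (by norm_num : (0:ℝ) ≤ 1/2)
        (by norm_num)
      have heq : (1/2 : ℝ) • a i + (1/2 : ℝ) • b i = (1/2 : ℝ) • (a i + b i) := by module
      rwa [heq] at this
  have hkey : ∑ p : Fin k × Bool, w p • pts p = x + ε • d := by
    rw [Fintype.sum_prod_type]
    have hterm : ∀ i : Fin k, ∑ s : Bool, w (i, s) • pts (i, s)
        = (1 / (2 * kR)) • (a i + b i) + (ε * f i) • (a i - b i) := by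
      intro i
      rw [Fintype.sum_bool]
      show (1 / (2 * kR) + ε * f i) • a i + (1 / (2 * kR) - ε * f i) • b i = _
      module
    rw [Finset.sum_congr rfl (fun i _ => hterm i)]
    rw [Finset.sum_add_distrib, hx]
    congr 1
    have : ε • d = ε • ∑ i : Fin k, f i • (a i - b i) := by
      rw [← hsum]
      congr 1
      exact Finset.sum_congr rfl fun i _ => by rw [hab]
    rw [this, Finset.smul_sum]
    exact Finset.sum_congr rfl fun i _ => by rw [smul_smul]
  exact ⟨x, hxC, ε, hεpos, by rw [← hkey]; exact hcomb⟩
/-! ### Auxiliary geometric lemmas -/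

theorem two_smul_half {n : ℕ} (u : Vec n) : (2:ℝ) • ((1/2 : ℝ) • u) = u := by
  rw [smul_smul]; norm_num

theorem snoc_inj {n : ℕ} {A A' : Vec n} {r r' : ℝ}
    (h : (Fin.snoc A r : Vec (n+1)) = Fin.snoc A' r') : A = A' ∧ r = r' := by
  constructor
  · have := congrArg Fin.init h
    simpa [Fin.init_snoc] using this
  · have := congrFun h (Fin.last n)
    simpa [Fin.snoc_last] using this

theorem isFace_subset {n : ℕ} {P F : Set (Vec n)} (hF : IsFace P F) : F ⊆ P := by
  obtain ⟨c, rfl⟩ := hF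
  intro x hx
  exact hx.1

theorem isFace_convex {n : ℕ} {P F : Set (Vec n)} (hP : Convex ℝ P) (hF : IsFace P F) :
    Convex ℝ F := by
  obtain ⟨c, rfl⟩ := hF
  intro x hx x' hx' s t hs ht hst
  refine ⟨hP hx.1 hx'.1 hs ht hst, ?_⟩
  intro y hy
  have h1 := hx.2 y hy
  have h2 := hx'.2 y hy
  rw [dot_add_right, dot_smul_right, dot_smul_right]
  have h3 : dot c y = s * dot c y + t * dot c y := by rw [← add_mul, hst, one_mul]
  linarith [mul_le_mul_of_nonneg_left h1 hs, mul_le_mul_of_nonneg_left h2 ht]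

theorem sdim_eq_finrank {n : ℕ} (A : Set (Vec n)) :
    sdim A = Module.finrank ℝ (vectorSpan ℝ A) := by
  rw [sdim, direction_affineSpan]

theorem vectorSpan_avgSet {n : ℕ} {F G : Set (Vec n)} (hF : F.Nonempty) (hG : G.Nonempty) :
    vectorSpan ℝ (avgSet F G) = vectorSpan ℝ F ⊔ vectorSpan ℝ G := by
  apply le_antisymm
  · rw [vectorSpan_def, Submodule.span_le]
    rintro w hw
    rw [Set.mem_vsub] at hw
    obtain ⟨p, hp, q, hq, hpq⟩ := hw
    obtain ⟨x, hx, y, hy, rfl⟩ := hp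
    obtain ⟨x', hx', y', hy', rfl⟩ := hq
    have hxx : x - x' ∈ vectorSpan ℝ F := by
      have := vsub_mem_vectorSpan ℝ hx hx'
      simpa [vsub_eq_sub] using this
    have hyy : y - y' ∈ vectorSpan ℝ G := by
      have := vsub_mem_vectorSpan ℝ hy hy'
      simpa [vsub_eq_sub] using this
    have hw' : w = (1/2 : ℝ) • (x - x') + (1/2 : ℝ) • (y - y') := by
      rw [← hpq]
      show (1/2 : ℝ) • (x + y) - (1/2 : ℝ) • (x' + y') = _
      module
    rw [hw']
    exact Submodule.add_mem _
      (Submodule.mem_sup_left (Submodule.smul_mem _ _ hxx))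
      (Submodule.mem_sup_right (Submodule.smul_mem _ _ hyy))
  · obtain ⟨y₀, hy₀⟩ := hG
    obtain ⟨x₀, hx₀⟩ := hF
    apply sup_le
    · rw [vectorSpan_def, Submodule.span_le]
      rintro w hw
      rw [Set.mem_vsub] at hw
      obtain ⟨x, hx, x', hx', hxx⟩ := hw
      have h1 : ((1/2 : ℝ) • (x + y₀) : Vec n) ∈ avgSet F G := ⟨x, hx, y₀, hy₀, rfl⟩
      have h2 : ((1/2 : ℝ) • (x' + y₀) : Vec n) ∈ avgSet F G := ⟨x', hx', y₀, hy₀, rfl⟩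
      have h3 := vsub_mem_vectorSpan ℝ h1 h2
      have h4 := Submodule.smul_mem (vectorSpan ℝ (avgSet F G)) (2:ℝ) h3
      have heq : (2:ℝ) • ((1/2 : ℝ) • (x + y₀) -ᵥ (1/2 : ℝ) • (x' + y₀) : Vec n) = w := by
        rw [← hxx, vsub_eq_sub]
        show (2:ℝ) • ((1/2 : ℝ) • (x + y₀) - (1/2 : ℝ) • (x' + y₀)) = x - x'
        module
      rwa [heq] at h4
    · rw [vectorSpan_def, Submodule.span_le]
      rintro w hw
      rw [Set.mem_vsub] at hw
      obtain ⟨y, hy, y', hy', hyy⟩ := hw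
      have h1 : ((1/2 : ℝ) • (x₀ + y) : Vec n) ∈ avgSet F G := ⟨x₀, hx₀, y, hy, rfl⟩
      have h2 : ((1/2 : ℝ) • (x₀ + y') : Vec n) ∈ avgSet F G := ⟨x₀, hx₀, y', hy', rfl⟩
      have h3 := vsub_mem_vectorSpan ℝ h1 h2
      have h4 := Submodule.smul_mem (vectorSpan ℝ (avgSet F G)) (2:ℝ) h3
      have heq : (2:ℝ) • ((1/2 : ℝ) • (x₀ + y) -ᵥ (1/2 : ℝ) • (x₀ + y') : Vec n) = w := by
        rw [← hyy, vsub_eq_sub]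
        show (2:ℝ) • ((1/2 : ℝ) • (x₀ + y) - (1/2 : ℝ) • (x₀ + y')) = y - y'
        module
      rwa [heq] at h4

/-- The key consequence of `InFphi`: for `x ∈ F`, `y ∈ G` with `x + y = 2z`, the point `x`
minimizes `⟨v, -⟩` on `P ∩ ρ_z P`. -/
theorem bot_of_inFphi {n : ℕ} {P F G : Set (Vec n)} {v : Vec n}
    (hIn : InFphi P v F G) {x y z w : Vec n} (hx : x ∈ F) (hy : y ∈ G)
    (hzdef : x + y = (2:ℝ) • z) (hw : w ∈ P) (hw2 : (2:ℝ) • z - w ∈ P) :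
    dot v x ≤ dot v w := by
  by_contra hlt
  push_neg at hlt
  apply hIn
  refine ⟨x, hx, y, hy, 2 * (dot v x - dot v w), by linarith, ?_⟩
  refine ⟨w, hw, (2:ℝ) • z - w, hw2, ?_⟩
  have h1 : (1/2 : ℝ) • (x + y) = (1/2 : ℝ) • (w + ((2:ℝ) • z - w)) := by
    rw [hzdef]
    module
  have h2 : dot (x - y) v - 2 * (dot v x - dot v w) = dot (w - ((2:ℝ) • z - w)) v := by
    have hy' : y = (2:ℝ) • z - x := by rw [← hzdef]; module
    have e1 : (w - ((2:ℝ) • z - w)) = (2:ℝ) • w - (2:ℝ) • z := by module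
    have e2 : (x - y) = (2:ℝ) • x - (2:ℝ) • z := by rw [hy']; module
    rw [e1, e2]
    simp only [dot_sub_left, dot_smul_left]
    rw [dot_comm x v, dot_comm w v]
    ring
  rw [h1, h2]

theorem mem_refl_inter {n : ℕ} {P : Set (Vec n)} {z w : Vec n}
    (hw : w ∈ P ∩ reflP z P) : (2:ℝ) • z - w ∈ P ∩ reflP z P := by
  obtain ⟨hwP, t, htP, htw⟩ := hw
  constructor
  · have : (2:ℝ) • z - w = t := by rw [← htw]; module
    rwa [this]
  · exact ⟨w, hwP, rfl⟩

theorem dot_reflect {n : ℕ} (v z w : Vec n) :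
    dot v ((2:ℝ) • z - w) = dot v ((2:ℝ) • z) - dot v w := dot_sub_right _ _ _

/-! ### The forward direction -/

theorem forward {n : ℕ} {P : Set (Vec n)} {v : Vec n} (hP : IsPolytope P)
    (hQPO : QuasiPosOriented P v) : TightSub P v := by
  intro F G hF hG hFne hGne hIn
  obtain ⟨S, hPS⟩ := hP
  have hPconv : Convex ℝ P := hPS ▸ convex_convexHull ℝ _
  have hFsub : F ⊆ P := isFace_subset hF
  have hGsub : G ⊆ P := isFace_subset hG
  have hFconv : Convex ℝ F := isFace_convex hPconv hF
  have hGconv : Convex ℝ G := isFace_convex hPconv hG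
  set U := vectorSpan ℝ F with hU
  set W := vectorSpan ℝ G with hW
  have hUW : U ⊓ W = ⊥ := by
    rw [Submodule.eq_bot_iff]
    intro d hd
    by_contra hd0
    obtain ⟨x, hx, ε₁, hε₁, hx'⟩ := exists_shift hFconv hFne (hd.1 : d ∈ U)
    have hdW : -d ∈ W := W.neg_mem hd.2
    obtain ⟨y, hy, ε₂, hε₂, hy'⟩ := exists_shift hGconv hGne hdW
    set ε : ℝ := min ε₁ ε₂ with hε
    have hεpos : 0 < ε := lt_min hε₁ hε₂
    have hxε : x + ε • d ∈ F := by
      have h := seg_mem hFconv hx hx' (θ := ε/ε₁) (by positivity)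
        (by rw [div_le_one hε₁]; exact min_le_left _ _)
      rwa [smul_smul, div_mul_cancel₀ _ (ne_of_gt hε₁)] at h
    have hyε : y + ε • (-d) ∈ G := by
      have h := seg_mem hGconv hy hy' (θ := ε/ε₂) (by positivity)
        (by rw [div_le_one hε₂]; exact min_le_right _ _)
      rwa [smul_smul, div_mul_cancel₀ _ (ne_of_gt hε₂)] at h
    set z : Vec n := (1/2 : ℝ) • (x + y) with hz
    have hzP : z ∈ P := by
      have := hPconv (hFsub hx) (hGsub hy) (by norm_num : (0:ℝ) ≤ 1/2)
        (by norm_num : (0:ℝ) ≤ 1/2) (by norm_num)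
      have heq : (1/2 : ℝ) • x + (1/2 : ℝ) • y = z := by rw [hz]; module
      rwa [heq] at this
    have hz2 : x + y = (2:ℝ) • z := by rw [hz]; module
    have hz2' : (x + ε • d) + (y + ε • (-d)) = (2:ℝ) • z := by
      rw [← hz2]; module
    have bot1 : IsBotOf (P ∩ reflP z P) v x := by
      refine ⟨⟨hFsub hx, y, hGsub hy, ?_⟩, ?_⟩
      · rw [← hz2]; module
      · intro w hw
        obtain ⟨hwP, t, htP, htw⟩ := hw
        refine bot_of_inFphi hIn hx hy hz2 hwP ?_
        have : (2:ℝ) • z - w = t := by rw [← htw]; module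
        rwa [this]
    have bot2 : IsBotOf (P ∩ reflP z P) v (x + ε • d) := by
      refine ⟨⟨hFsub hxε, y + ε • (-d), hGsub hyε, ?_⟩, ?_⟩
      · rw [← hz2']; module
      · intro w hw
        obtain ⟨hwP, t, htP, htw⟩ := hw
        refine bot_of_inFphi hIn hxε hyε hz2' hwP ?_
        have : (2:ℝ) • z - w = t := by rw [← htw]; module
        rwa [this]
    obtain ⟨b, _, hbu⟩ := (hQPO z hzP).1
    have h1 : x = b := hbu x bot1
    have h2 : x + ε • d = b := hbu _ bot2
    have h3 : x + ε • d = x := h2.trans h1.symm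
    have hεd : ε • d = 0 := by
      have := congrArg (fun w => w - x) h3
      simpa using this
    rcases smul_eq_zero.1 hεd with h | h
    · exact absurd h (ne_of_gt hεpos)
    · exact hd0 h
  have hform := Submodule.finrank_sup_add_finrank_inf_eq U W
  rw [hUW] at hform
  have hbot : Module.finrank ℝ (⊥ : Submodule ℝ (Vec n)) = 0 := finrank_bot ℝ _
  rw [sdim_eq_finrank, sdim_eq_finrank, sdim_eq_finrank, vectorSpan_avgSet hFne hGne]
  rw [← hU, ← hW]
  rw [hbot] at hform
  omega

/-! ### The backward direction -/

/-- The standard bilinear form on `Vec n × ℝ`. -/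
def Bform (n : ℕ) : (Vec n × ℝ) →ₗ[ℝ] (Vec n × ℝ) →ₗ[ℝ] ℝ :=
  LinearMap.mk₂ ℝ (fun c q => dot c.1 q.1 + c.2 * q.2)
    (by intro m₁ m₂ q; show dot (m₁.1 + m₂.1) q.1 + (m₁.2 + m₂.2) * q.2 = _
        rw [dot_add_left]; ring)
    (by intro r m q; show dot (r • m.1) q.1 + (r * m.2) * q.2 = _
        rw [dot_smul_left, smul_eq_mul]; ring)
    (by intro m q₁ q₂; show dot m.1 (q₁.1 + q₂.1) + m.2 * (q₁.2 + q₂.2) = _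
        rw [dot_add_right]; ring)
    (by intro r m q; show dot m.1 (r • q.1) + m.2 * (r * q.2) = _
        rw [dot_smul_right, smul_eq_mul]; ring)

theorem Bform_apply {n : ℕ} (c q : Vec n × ℝ) :
    Bform n c q = dot c.1 q.1 + c.2 * q.2 := rfl

theorem Bform_pos {n : ℕ} : ∀ u : Vec n × ℝ, u ≠ 0 → 0 < Bform n u u := by
  intro u hu
  rw [Bform_apply]
  rcases eq_or_ne u.1 0 with h1 | h1
  · have h2 : u.2 ≠ 0 := by
      intro h2
      exact hu (Prod.ext h1 h2)
    have := dot_self_nonneg u.1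
    nlinarith [mul_self_pos.2 h2]
  · nlinarith [dot_self_pos h1, mul_self_nonneg u.2]

/-- The projection map `π^φ` (scaled by 2) as a linear map. -/
def Lmap {n : ℕ} (v : Vec n) : (Vec n × Vec n) →ₗ[ℝ] (Vec n × ℝ) where
  toFun q := (q.1 + q.2, dot v q.1 - dot v q.2)
  map_add' q q' := by
    refine Prod.ext ?_ ?_
    · show (q.1 + q'.1) + (q.2 + q'.2) = (q.1 + q.2) + (q'.1 + q'.2)
      module
    · show dot v (q.1 + q'.1) - dot v (q.2 + q'.2) = _
      rw [dot_add_right, dot_add_right]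
      show _ = (dot v q.1 - dot v q.2) + (dot v q'.1 - dot v q'.2)
      ring
  map_smul' r q := by
    refine Prod.ext ?_ ?_
    · show r • q.1 + r • q.2 = r • (q.1 + q.2)
      module
    · show dot v (r • q.1) - dot v (r • q.2) = r • (dot v q.1 - dot v q.2)
      rw [dot_smul_right, dot_smul_right, smul_eq_mul]
      ring

theorem Lmap_apply {n : ℕ} (v : Vec n) (q : Vec n × Vec n) :
    Lmap v q = (q.1 + q.2, dot v q.1 - dot v q.2) := rfl

theorem dot_sub_left_comm {n : ℕ} (s t v : Vec n) :
    dot (s - t) v = dot v s - dot v t := by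
  rw [dot_sub_left, dot_comm s v, dot_comm t v]

theorem backward {n : ℕ} {P : Set (Vec n)} {v : Vec n} (hP : IsPolytope P)
    (hT : TightSub P v) : QuasiPosOriented P v := by
  intro z hz
  obtain ⟨S, hPS⟩ := hP
  have hPconv : Convex ℝ P := hPS ▸ convex_convexHull ℝ _
  set Q : Set (Vec n) := P ∩ reflP z P with hQ
  have hQz : z ∈ Q := ⟨hz, z, hz, by module⟩
  have hPcomp : IsCompact P := by
    rw [hPS]
    exact S.finite_toSet.isCompact_convexHull (𝕜 := ℝ)
  have hreflcomp : IsCompact (reflP z P) :=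
    hPcomp.image (continuous_const.sub continuous_id)
  have hQcomp : IsCompact Q := hPcomp.inter_right hreflcomp.isClosed
  have hdotcont : Continuous (fun x : Vec n => dot v x) := by
    apply continuous_finset_sum
    intro i _
    exact continuous_const.mul (continuous_apply i)
  obtain ⟨x₁, hx₁Q, hx₁min⟩ := hQcomp.exists_isMinOn ⟨z, hQz⟩ hdotcont.continuousOn
  have bot1 : IsBotOf Q v x₁ := ⟨hx₁Q, fun y hy => hx₁min hy⟩
  -- uniqueness of the minimizer
  have huniq : ∀ x₂ : Vec n, IsBotOf Q v x₂ → x₂ = x₁ := by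
    intro x₂ h₂
    by_contra hne
    have hd0 : x₂ - x₁ ≠ 0 := sub_ne_zero.2 hne
    set d : Vec n := x₂ - x₁ with hd
    set y₁ : Vec n := (2:ℝ) • z - x₁ with hy₁
    set y₂ : Vec n := (2:ℝ) • z - x₂ with hy₂
    have hx₁P : x₁ ∈ P := hx₁Q.1
    have hx₂P : x₂ ∈ P := h₂.1.1
    have hy₁P : y₁ ∈ P := by
      obtain ⟨t, htP, htw⟩ := hx₁Q.2
      have ht : y₁ = t := by rw [hy₁, ← htw]; module
      rwa [ht]
    have hy₂P : y₂ ∈ P := by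
      obtain ⟨t, htP, htw⟩ := h₂.1.2
      have ht : y₂ = t := by rw [hy₂, ← htw]; module
      rwa [ht]
    have hvx : dot v x₁ = dot v x₂ := le_antisymm (bot1.2 x₂ h₂.1) (h₂.2 x₁ bot1.1)
    -- support problem in `Vec n × ℝ`
    set T : Finset (Vec n × ℝ) := (S ×ˢ S).image (fun q => Lmap v q) with hT'
    have hhull : convexHull ℝ (T : Set (Vec n × ℝ)) = Lmap v '' (P ×ˢ P) := by
      rw [hT', Finset.coe_image, ← LinearMap.image_convexHull, Finset.coe_product,
        convexHull_prod, ← hPS]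
    set p : Vec n × ℝ := Lmap v (x₁, y₁) with hp'
    set u : Vec n × ℝ := ((0 : Vec n), (-1 : ℝ)) with hu'
    have hx₁y₁ : x₁ + y₁ = (2:ℝ) • z := by rw [hy₁]; module
    have hp : p ∈ convexHull ℝ (T : Set (Vec n × ℝ)) := by
      rw [hhull]
      exact ⟨(x₁, y₁), Set.mk_mem_prod hx₁P hy₁P, rfl⟩
    have hray : ∀ ε : ℝ, 0 < ε → p + ε • u ∉ convexHull ℝ (T : Set (Vec n × ℝ)) := by
      intro ε hε hmem
      rw [hhull] at hmem
      obtain ⟨⟨x, y⟩, hmemxy, heq⟩ := hmem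
      have hxP : x ∈ P := hmemxy.1
      have hyP : y ∈ P := hmemxy.2
      have h1 : x + y = x₁ + y₁ := by
        have h := congrArg Prod.fst heq
        simp only [Lmap_apply, hp', hu', Prod.fst_add, Prod.smul_fst, smul_zero,
          add_zero] at h
        exact h
      have h2 : dot v x - dot v y = (dot v x₁ - dot v y₁) + ε * (-1) := by
        have h := congrArg Prod.snd heq
        simp only [Lmap_apply, hp', hu', Prod.snd_add, Prod.smul_snd, smul_eq_mul] at h
        exact h
      have hxQ : x ∈ Q := by
        refine ⟨hxP, y, hyP, ?_⟩
        rw [← hx₁y₁, ← h1]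
        module
      have hsx : dot v x + dot v y = dot v x₁ + dot v y₁ := by
        have h := congrArg (dot v) h1
        rwa [dot_add_right, dot_add_right] at h
      have hlt : dot v x < dot v x₁ := by linarith
      exact absurd (bot1.2 x hxQ) (not_le.2 hlt)
    obtain ⟨c, hcu, hcsupp⟩ := exists_support (Bform n) Bform_pos T p u hp hray
    have hμ : c.2 < 0 := by
      rw [Bform_apply, hu'] at hcu
      simp only [dot_zero_right] at hcu
      linarith
    have hsupP : ∀ q ∈ Lmap v '' (P ×ˢ P), Bform n c q ≤ Bform n c p := by
      have hsub : convexHull ℝ (T : Set (Vec n × ℝ)) ⊆ {w | Bform n c w ≤ Bform n c p} := by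
        apply convexHull_min
        · intro q hq
          exact hcsupp q hq
        · exact convex_halfSpace_le ⟨fun q q' => map_add (Bform n c) q q',
            fun r q => map_smul (Bform n c) r q⟩ _
      rw [hhull] at hsub
      exact fun q hq => hsub hq
    set a : Vec n := c.1 + c.2 • v with ha'
    set b : Vec n := c.1 - c.2 • v with hb'
    have hab : ∀ x y : Vec n, dot a x + dot b y
        = dot c.1 (x + y) + c.2 * (dot v x - dot v y) := by
      intro x y
      rw [ha', hb', dot_add_left, dot_sub_left, dot_smul_left, dot_smul_left,
        dot_add_right, dot_comm v x, dot_comm v y]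
      ring
    have hBL : ∀ x y : Vec n, Bform n c (Lmap v (x, y)) = dot a x + dot b y := by
      intro x y
      rw [Bform_apply, Lmap_apply, hab]
    have hjoint : ∀ x ∈ P, ∀ y ∈ P, dot a x + dot b y ≤ dot a x₁ + dot b y₁ := by
      intro x hx y hy
      have h := hsupP (Lmap v (x, y)) ⟨(x, y), Set.mk_mem_prod hx hy, rfl⟩
      rw [hp'] at h
      rwa [hBL, hBL] at h
    have hdvd : dot v d = 0 := by
      rw [hd, dot_sub_right, hvx]
      ring
    have hx₂eq : x₂ = x₁ + d := by rw [hd]; module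
    have hy₂eq : y₂ = y₁ - d := by rw [hy₂, hy₁, hd]; module
    have had : dot a d = dot c.1 d := by
      rw [ha', dot_add_left, dot_smul_left, hdvd]
      ring
    have hbd : dot b d = dot c.1 d := by
      rw [hb', dot_sub_left, dot_smul_left, hdvd]
      ring
    have hval2 : dot a x₂ + dot b y₂ = dot a x₁ + dot b y₁ := by
      have e1 : dot a x₂ = dot a x₁ + dot a d := by rw [hx₂eq, dot_add_right]
      have e2 : dot b y₂ = dot b y₁ - dot b d := by rw [hy₂eq, dot_sub_right]
      rw [e1, e2, had, hbd]
      ring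
    set F : Set (Vec n) := {x | x ∈ P ∧ ∀ x' ∈ P, dot a x' ≤ dot a x} with hF'
    set G : Set (Vec n) := {y | y ∈ P ∧ ∀ y' ∈ P, dot b y' ≤ dot b y} with hG'
    have hx₁F : x₁ ∈ F := by
      refine ⟨hx₁P, fun x' hx' => ?_⟩
      have := hjoint x' hx' y₁ hy₁P
      linarith
    have hy₁G : y₁ ∈ G := by
      refine ⟨hy₁P, fun y' hy' => ?_⟩
      have := hjoint x₁ hx₁P y' hy'
      linarith
    have hx₂F : x₂ ∈ F := by
      refine ⟨hx₂P, fun x' hx' => ?_⟩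
      have := hjoint x' hx' y₂ hy₂P
      linarith
    have hy₂G : y₂ ∈ G := by
      refine ⟨hy₂P, fun y' hy' => ?_⟩
      have := hjoint x₂ hx₂P y' hy'
      linarith
    have hInF : InFphi P v F G := by
      rintro ⟨x, hxF, y, hyG, lam, hlam, x', hx'P, y', hy'P, heq⟩
      obtain ⟨hA, hr⟩ := snoc_inj heq
      have hsum : x + y = x' + y' := by
        have h := congrArg (fun w => (2:ℝ) • w) hA
        simpa only [two_smul_half] using h
      have hmax : dot a x' + dot b y' ≤ dot a x + dot b y :=
        add_le_add (hxF.2 x' hx'P) (hyG.2 y' hy'P)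
      rw [hab, hab, ← hsum] at hmax
      rw [dot_sub_left_comm, dot_sub_left_comm] at hr
      -- hr : (dot v x - dot v y) - lam = dot v x' - dot v y'
      nlinarith [mul_pos (neg_pos.2 hμ) hlam]
    have htight := hT F G ⟨a, rfl⟩ ⟨b, rfl⟩ ⟨x₁, hx₁F⟩ ⟨y₁, hy₁G⟩ hInF
    rw [sdim_eq_finrank, sdim_eq_finrank, sdim_eq_finrank,
      vectorSpan_avgSet ⟨x₁, hx₁F⟩ ⟨y₁, hy₁G⟩] at htight
    have hform := Submodule.finrank_sup_add_finrank_inf_eq (vectorSpan ℝ F) (vectorSpan ℝ G)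
    have hinf0 : Module.finrank ℝ ↥(vectorSpan ℝ F ⊓ vectorSpan ℝ G) = 0 := by omega
    have hinfbot : vectorSpan ℝ F ⊓ vectorSpan ℝ G = ⊥ := Submodule.finrank_eq_zero.1 hinf0
    have hdF : d ∈ vectorSpan ℝ F := by
      have h := vsub_mem_vectorSpan ℝ hx₂F hx₁F
      rwa [vsub_eq_sub, ← hd] at h
    have hdG : d ∈ vectorSpan ℝ G := by
      have h := vsub_mem_vectorSpan ℝ hy₁G hy₂G
      rw [vsub_eq_sub] at h
      have heq : y₁ - y₂ = d := by rw [hy₁, hy₂, hd]; module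
      rwa [heq] at h
    have hmem : d ∈ (⊥ : Submodule ℝ (Vec n)) := by
      rw [← hinfbot]
      exact Submodule.mem_inf.2 ⟨hdF, hdG⟩
    exact hd0 (Submodule.mem_bot ℝ |>.1 hmem)
  constructor
  · exact ⟨x₁, bot1, huniq⟩
  · -- unique maximizer via the reflection
    refine ⟨(2:ℝ) • z - x₁, ⟨(mem_refl_inter bot1.1 : _), ?_⟩, ?_⟩
    · intro w hw
      have h := bot1.2 _ (mem_refl_inter hw)
      rw [dot_reflect] at h
      rw [dot_reflect]
      linarith
    · intro t₂ ht₂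
      have hbot₂ : IsBotOf Q v ((2:ℝ) • z - t₂) := by
        refine ⟨mem_refl_inter ht₂.1, ?_⟩
        intro w hw
        have h := ht₂.2 _ (mem_refl_inter hw)
        rw [dot_reflect] at h ⊢
        linarith
      have h := huniq _ hbot₂
      calc t₂ = (2:ℝ) • z - ((2:ℝ) • z - t₂) := by module
        _ = (2:ℝ) • z - x₁ := by rw [h]

/-- A polytope `(P, v)` is quasi-positively oriented (for every `z ∈ P` the
polytope `P ∩ ρ_z P` admits a unique minimizer and a unique maximizer of `⟨-, v⟩`) if and only
if the coherent subdivision `π(F^φ)` is tight (`dim F + dim G = dim (F+G)/2` for every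
`(F, G) ∈ F^φ`). -/
theorem stmt5 {n : ℕ} (P : Set (Vec n)) (v : Vec n) (hP : IsPolytope P) :
    QuasiPosOriented P v ↔ TightSub P v := by
  exact ⟨fun h => forward hP h, fun h => backward hP h⟩
end
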